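/- Let f : [0,1] → ℝ be 1-Lipschitz, and fix positive integers t and T. Then there exists a 1-Lipschitz continuous function f̃ : [0,1] → ℝ such that f̃(i/T) = ⌈T f(i/T) / 2^{-t}⌉ · 2^{-t}/T for every i ∈ {0,1,...,T}, and |f̃(x) - f(x)| ≤ 2^{-t}/T for all x ∈ [0,1]. -/

import Mathlib

open Set

private lemma lip_inf' {ι : Type*} (s : Finset ι) (hs : s.Nonempty)
    (F : ι → ℝ → ℝ) (h : ∀ i ∈ s, ∀ x y : ℝ, |F i x - F i y| ≤ |x - y|) :
    ∀ x y : ℝ, |(s.inf' hs fun i => F i x) - (s.inf' hs fun i => F i y)| ≤ |x - y| := by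
  have key : ∀ x y : ℝ,
      (s.inf' hs fun i => F i x) - (s.inf' hs fun i => F i y) ≤ |x - y| := by
    intro x y
    obtain ⟨i, hi, hie⟩ := s.exists_mem_eq_inf' hs (fun i => F i y)
    rw [hie]
    calc (s.inf' hs fun i => F i x) - F i y ≤ F i x - F i y := by
          gcongr; exact Finset.inf'_le _ hi
      _ ≤ |F i x - F i y| := le_abs_self _
      _ ≤ |x - y| := h i hi x y
  intro x y
  rw [abs_sub_le_iff]
  refine ⟨key x y, ?_⟩
  have := key y x
  rwa [abs_sub_comm] at this

/-- Proposition 4: existence of the transformed function f̃. -/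
theorem stmt13 (f : ℝ → ℝ) (hf : LipschitzOnWith 1 f (Icc 0 1))
    (t T : ℕ) (ht : 0 < t) (hT : 0 < T) :
    ∃ ft : ℝ → ℝ, ContinuousOn ft (Icc 0 1) ∧ LipschitzOnWith 1 ft (Icc 0 1) ∧
      (∀ i : ℕ, i ≤ T →
        ft ((i : ℝ) / T) =
          ((⌈(T : ℝ) * f ((i : ℝ) / T) / (2 : ℝ) ^ (-(t : ℤ))⌉ : ℤ) : ℝ) *
            ((2 : ℝ) ^ (-(t : ℤ)) / T)) ∧
      ∀ x ∈ Icc (0 : ℝ) 1, |ft x - f x| ≤ (2 : ℝ) ^ (-(t : ℤ)) / T := by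
  have hT0 : (0:ℝ) < T := by exact_mod_cast hT
  have hTne : (T:ℝ) ≠ 0 := ne_of_gt hT0
  have h2 : (0:ℝ) < (2:ℝ) ^ (-(t:ℤ)) := zpow_pos (by norm_num) _
  set E : ℝ := (2:ℝ) ^ (-(t:ℤ)) / T with hEdef
  have hE : 0 < E := div_pos h2 hT0
  set c : ℕ → ℤ := fun i => ⌈(T : ℝ) * f ((i : ℝ) / T) / (2 : ℝ) ^ (-(t : ℤ))⌉ with hc
  -- the rounded target value a_i
  set a : ℕ → ℝ := fun i => (T : ℝ) * f ((i : ℝ) / T) / (2 : ℝ) ^ (-(t : ℤ)) with ha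
  have haE : ∀ i, a i * E = f ((i:ℝ)/T) := by
    intro i
    field_simp [ha, hEdef]
    ring
    simp only [ha, hEdef]
    field_simp
  have hmem : ∀ i : ℕ, i ≤ T → ((i:ℝ)/T) ∈ Icc (0:ℝ) 1 := by
    intro i hi
    constructor
    · positivity
    · rw [div_le_one hT0]; exact_mod_cast hi
  have hdist : ∀ x ∈ Icc (0:ℝ) 1, ∀ y ∈ Icc (0:ℝ) 1, |f x - f y| ≤ |x - y| := by
    intro x hx y hy
    have := hf.dist_le_mul x hx y hy
    simpa [Real.dist_eq] using this
  -- lower bound for grid values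
  have hlb : ∀ i : ℕ, f ((i:ℝ)/T) ≤ (c i : ℝ) * E := by
    intro i
    rw [← haE i]
    exact mul_le_mul_of_nonneg_right (Int.le_ceil _) hE.le
  have hub : ∀ i : ℕ, (c i : ℝ) * E < f ((i:ℝ)/T) + E := by
    intro i
    have : (c i : ℝ) < a i + 1 := Int.ceil_lt_add_one _
    calc (c i : ℝ) * E < (a i + 1) * E := by
          exact mul_lt_mul_of_pos_right this hE
      _ = f ((i:ℝ)/T) + E := by rw [add_mul, one_mul, haE]
  -- key: the grid values are 1-Lipschitz on the grid
  have hkey : ∀ i ≤ T, ∀ j ≤ T,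
      (c j : ℝ) * E ≤ (c i : ℝ) * E + |(i:ℝ)/T - (j:ℝ)/T| := by
    intro i hi j hj
    set k : ℤ := |(i:ℤ) - (j:ℤ)| with hk
    have hkr : (k:ℝ) = |(i:ℝ) - (j:ℝ)| := by
      rw [hk]; push_cast; ring_nf
    have hkd : |(i:ℝ)/T - (j:ℝ)/T| = (k:ℝ)/T := by
      rw [div_sub_div_same, abs_div, abs_of_pos hT0, hkr]
    have hkE : (k:ℝ)/T = (k * 2^t : ℤ) * E := by
      rw [hEdef]
      push_cast
      rw [zpow_neg]
      field_simp
      ring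
      rw [zpow_natCast]
    have hint : c j ≤ c i + k * 2^t := by
      rw [hc]
      apply Int.ceil_le.2
      push_cast
      have h1 : a j - a i ≤ (k:ℝ) * 2^t := by
        rw [ha]
        have hfd : f ((j:ℝ)/T) - f ((i:ℝ)/T) ≤ (k:ℝ)/T := by
          calc f ((j:ℝ)/T) - f ((i:ℝ)/T) ≤ |f ((j:ℝ)/T) - f ((i:ℝ)/T)| := le_abs_self _
            _ ≤ |(j:ℝ)/T - (i:ℝ)/T| := hdist _ (hmem j hj) _ (hmem i hi)
            _ = (k:ℝ)/T := by rw [abs_sub_comm]; exact hkd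
        have : (T:ℝ) * f ((j:ℝ)/T) - (T:ℝ) * f ((i:ℝ)/T) ≤ (k:ℝ) := by
          calc (T:ℝ) * f ((j:ℝ)/T) - (T:ℝ) * f ((i:ℝ)/T)
              = (T:ℝ) * (f ((j:ℝ)/T) - f ((i:ℝ)/T)) := by ring
            _ ≤ (T:ℝ) * ((k:ℝ)/T) := by
                exact mul_le_mul_of_nonneg_left hfd hT0.le
            _ = (k:ℝ) := by field_simp
        have h22 : (2:ℝ)^(t:ℕ) * (2:ℝ)^(-(t:ℤ)) = 1 := by
          rw [← zpow_natCast (2:ℝ) t, ← zpow_add₀ (by norm_num : (2:ℝ) ≠ 0)]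
          simp
        rw [div_sub_div_same, div_le_iff₀ h2]
        calc (T:ℝ) * f ((j:ℝ)/T) - (T:ℝ) * f ((i:ℝ)/T) ≤ (k:ℝ) := this
          _ = (k:ℝ) * 2^t * (2:ℝ)^(-(t:ℤ)) := by
              rw [mul_assoc, h22, mul_one]
      have h2' : a i ≤ (c i : ℝ) := Int.le_ceil _
      calc a j = a i + (a j - a i) := by ring
        _ ≤ (c i : ℝ) + (k:ℝ) * 2^t := by
            push_cast
            exact add_le_add h2' h1
    calc (c j : ℝ) * E ≤ ((c i + k * 2^t : ℤ) : ℝ) * E := by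
          exact mul_le_mul_of_nonneg_right (by exact_mod_cast hint) hE.le
      _ = (c i : ℝ) * E + ((k * 2^t : ℤ) : ℝ) * E := by push_cast; ring
      _ = (c i : ℝ) * E + |(i:ℝ)/T - (j:ℝ)/T| := by
          rw [hkd, hkE]
  -- the candidate function
  have hne : (Finset.range (T+1)).Nonempty := ⟨0, by simp⟩
  set G : ℝ → ℝ := fun x => (Finset.range (T+1)).inf' hne fun i => (c i : ℝ) * E + |x - (i:ℝ)/T|
    with hG
  set ft : ℝ → ℝ := fun x => min (f x + E) (G x) with hft
  -- ft is 1-Lipschitz on Icc 0 1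
  have hGlip : ∀ x y : ℝ, |G x - G y| ≤ |x - y| := by
    apply lip_inf'
    intro i _ x y
    have : (c i : ℝ) * E + |x - (i:ℝ)/T| - ((c i : ℝ) * E + |y - (i:ℝ)/T|)
        = |x - (i:ℝ)/T| - |y - (i:ℝ)/T| := by ring
    rw [this]
    calc |(|x - (i:ℝ)/T| - |y - (i:ℝ)/T|)| ≤ |x - (i:ℝ)/T - (y - (i:ℝ)/T)| :=
          abs_abs_sub_abs_le_abs_sub _ _
      _ = |x - y| := by ring_nf
  have hlip : LipschitzOnWith 1 ft (Icc 0 1) := by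
    rw [lipschitzOnWith_iff_dist_le_mul]
    intro x hx y hy
    simp only [Real.dist_eq, NNReal.coe_one, one_mul]
    calc |ft x - ft y| ≤ max |f x + E - (f y + E)| |G x - G y| :=
          abs_min_sub_min_le_max _ _ _ _
      _ ≤ |x - y| := by
          apply max_le
          · simpa using hdist x hx y hy
          · exact hGlip x y
  refine ⟨ft, hlip.continuousOn, hlip, ?_, ?_⟩
  · -- grid values
    intro j hj
    have hGj : G ((j:ℝ)/T) = (c j : ℝ) * E := by
      apply le_antisymm
      · calc G ((j:ℝ)/T) ≤ (c j : ℝ) * E + |(j:ℝ)/T - (j:ℝ)/T| :=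
              Finset.inf'_le _ (Finset.mem_range.mpr (Nat.lt_succ_of_le hj))
          _ = (c j : ℝ) * E := by simp
      · apply Finset.le_inf'
        intro i hi
        have h := hkey i (Nat.lt_succ_iff.mp (Finset.mem_range.mp hi)) j hj
        rwa [abs_sub_comm] at h
    show min (f ((j:ℝ)/T) + E) (G ((j:ℝ)/T)) = (c j : ℝ) * E
    rw [hGj]
    exact min_eq_right (hub j).le
  · -- approximation bound
    intro x hx
    have hle : ft x ≤ f x + E := min_le_left _ _
    have hge : f x ≤ ft x := by
      apply le_min (by linarith)
      apply Finset.le_inf'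
      intro i hi
      have hiT : i ≤ T := Nat.lt_succ_iff.mp (Finset.mem_range.mp hi)
      have : f x - f ((i:ℝ)/T) ≤ |x - (i:ℝ)/T| := by
        calc f x - f ((i:ℝ)/T) ≤ |f x - f ((i:ℝ)/T)| := le_abs_self _
          _ ≤ |x - (i:ℝ)/T| := hdist x hx _ (hmem i hiT)
      have := hlb i
      linarith
    rw [abs_le]
    constructor <;> linarith
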